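/- Let $A$ be a Banach algebra and $\Lambda$ a nonempty set. The map $\theta : \mathbb{M}_\Lambda(A) \to A \hat{\otimes}_p \mathbb{M}_\Lambda(\mathbb{C})$ defined by $\theta((a_{ij})) = \sum_{i,j} a_{ij} \otimes E_{ij}$ is an isometric algebra isomorphism, where $\mathbb{M}_\Lambda(A)$ is the $\ell^1$-Munn algebra of $\Lambda \times \Lambda$ matrices over $A$ with $\sum_{i,j}\|a_{ij}\| < \infty$, and $E_{ij}$ are the matrix units. -/

import Mathlib

open Filter Topology

universe u

/-- An (in general non-unital) Banach algebra structure on a complex Banach space `A`: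
a continuous (bounded) bilinear associative multiplication. -/
structure BanachAlgebraStr (A : Type u) [NormedAddCommGroup A] [NormedSpace ℂ A]
    [CompleteSpace A] : Type u where
  mul : A → A → A
  add_mul' : ∀ a b c, mul (a + b) c = mul a c + mul b c
  mul_add' : ∀ a b c, mul a (b + c) = mul a b + mul a c
  smul_mul' : ∀ (r : ℂ) (a b), mul (r • a) b = r • mul a b
  mul_smul' : ∀ (r : ℂ) (a b), mul a (r • b) = r • mul a b
  mul_assoc' : ∀ a b c, mul (mul a b) c = mul a (mul b c)
  bound : ∃ C : ℝ, ∀ a b, ‖mul a b‖ ≤ C * ‖a‖ * ‖b‖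

variable {A : Type u} [NormedAddCommGroup A] [NormedSpace ℂ A] [CompleteSpace A]

/-- A realization of the projective tensor product `A ⊗̂ A` of a Banach algebra with itself,
together with its Banach `A`-bimodule structure (`lsmul`, `rsmul`) and the
multiplication (diagonal) map `projL = π_A`. The defining properties of the projective
tensor product (projective norm bound, density of elementary tensors, and the universal
property for bounded bilinear maps) are part of the data. -/
structure TensorData (M : BanachAlgebraStr A) : Type (u + 1) where
  X : Type u
  [normedX : NormedAddCommGroup X]
  [spaceX : NormedSpace ℂ X]
  [completeX : CompleteSpace X]
  tmul : A → A → X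
  tmul_add_left : ∀ a b c, tmul (a + b) c = tmul a c + tmul b c
  tmul_add_right : ∀ a b c, tmul a (b + c) = tmul a b + tmul a c
  tmul_smul_left : ∀ (r : ℂ) (a b), tmul (r • a) b = r • tmul a b
  tmul_smul_right : ∀ (r : ℂ) (a b), tmul a (r • b) = r • tmul a b
  norm_tmul : ∀ a b, ‖tmul a b‖ ≤ ‖a‖ * ‖b‖
  dense_span : Dense (Submodule.span ℂ (Set.range fun p : A × A => tmul p.1 p.2) : Set X)
  lift : ∀ (Y : Type u) [NormedAddCommGroup Y] [NormedSpace ℂ Y] [CompleteSpace Y]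
      (B : A → A → Y) (C : ℝ),
      (∀ a b c, B (a + b) c = B a c + B b c) →
      (∀ a b c, B a (b + c) = B a b + B a c) →
      (∀ (r : ℂ) (a b), B (r • a) b = r • B a b) →
      (∀ (r : ℂ) (a b), B a (r • b) = r • B a b) →
      (∀ a b, ‖B a b‖ ≤ C * (‖a‖ * ‖b‖)) →
      ∃ L : X →L[ℂ] Y, (∀ a b, L (tmul a b) = B a b) ∧ ‖L‖ ≤ C
  lsmul : A → X →L[ℂ] X
  rsmul : A → X →L[ℂ] X
  lsmul_tmul : ∀ a b c, lsmul a (tmul b c) = tmul (M.mul a b) c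
  rsmul_tmul : ∀ a b c, rsmul a (tmul b c) = tmul b (M.mul c a)
  projL : X →L[ℂ] A
  projL_tmul : ∀ a b, projL (tmul a b) = M.mul a b

attribute [instance] TensorData.normedX TensorData.spaceX TensorData.completeX

/-- `A` is approximately biprojective: there is a net (formulated via a filter on an
index type) of continuous `A`-bimodule morphisms `ρ_i : A → A ⊗̂ A` with
`π_A ∘ ρ_i (a) → a` for every `a`. -/
def ApproxBiprojective (M : BanachAlgebraStr A) : Prop :=
  ∃ T : TensorData M, ∃ (ι : Type u) (l : Filter ι) (ρ : ι → A →L[ℂ] T.X),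
    l.NeBot ∧
    (∀ i a x, ρ i (M.mul a x) = T.lsmul a (ρ i x)) ∧
    (∀ i a x, ρ i (M.mul x a) = T.rsmul a (ρ i x)) ∧
    ∀ a : A, Tendsto (fun i => T.projL (ρ i a)) l (𝓝 a)

/-- A character on the Banach algebra `(A, M)`: a nonzero continuous multiplicative
linear functional. -/
structure IsCharacter (M : BanachAlgebraStr A) (φ : A →L[ℂ] ℂ) : Prop where
  map_mul' : ∀ a b, φ (M.mul a b) = φ a * φ b
  ne_zero : φ ≠ 0

/-- `A` has a left approximate identity: a net `(e_i)` with `e_i * a → a` for all `a`. -/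
def HasLeftApproxId (M : BanachAlgebraStr A) : Prop :=
  ∃ (ι : Type u) (l : Filter ι) (e : ι → A), l.NeBot ∧
    ∀ a : A, Tendsto (fun i => M.mul (e i) a) l (𝓝 a)

/-- `A` has a right approximate identity. -/
def HasRightApproxId (M : BanachAlgebraStr A) : Prop :=
  ∃ (ι : Type u) (l : Filter ι) (e : ι → A), l.NeBot ∧
    ∀ a : A, Tendsto (fun i => M.mul a (e i)) l (𝓝 a)

/-- A realization of the projective tensor product `A ⊗̂ B` of two Banach algebras,
as a Banach algebra `C` with a bounded bilinear, multiplicative map `(a,b) ↦ a ⊗ b`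
whose elementary tensors span densely, carrying the projective norm bound and the
universal property. -/
structure TensorAlgData {A B : Type u}
    [NormedAddCommGroup A] [NormedSpace ℂ A] [CompleteSpace A]
    [NormedAddCommGroup B] [NormedSpace ℂ B] [CompleteSpace B]
    (MA : BanachAlgebraStr A) (MB : BanachAlgebraStr B) : Type (u + 1) where
  C : Type u
  [normedC : NormedAddCommGroup C]
  [spaceC : NormedSpace ℂ C]
  [completeC : CompleteSpace C]
  MC : BanachAlgebraStr C
  tmul : A → B → C
  tmul_add_left : ∀ a a' b, tmul (a + a') b = tmul a b + tmul a' b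
  tmul_add_right : ∀ a b b', tmul a (b + b') = tmul a b + tmul a b'
  tmul_smul_left : ∀ (r : ℂ) (a b), tmul (r • a) b = r • tmul a b
  tmul_smul_right : ∀ (r : ℂ) (a b), tmul a (r • b) = r • tmul a b
  norm_tmul : ∀ a b, ‖tmul a b‖ ≤ ‖a‖ * ‖b‖
  dense_span : Dense (Submodule.span ℂ (Set.range fun p : A × B => tmul p.1 p.2) : Set C)
  lift : ∀ (Y : Type u) [NormedAddCommGroup Y] [NormedSpace ℂ Y] [CompleteSpace Y]
      (Φ : A → B → Y) (K : ℝ),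
      (∀ a a' b, Φ (a + a') b = Φ a b + Φ a' b) →
      (∀ a b b', Φ a (b + b') = Φ a b + Φ a b') →
      (∀ (r : ℂ) (a b), Φ (r • a) b = r • Φ a b) →
      (∀ (r : ℂ) (a b), Φ a (r • b) = r • Φ a b) →
      (∀ a b, ‖Φ a b‖ ≤ K * (‖a‖ * ‖b‖)) →
      ∃ L : C →L[ℂ] Y, (∀ a b, L (tmul a b) = Φ a b) ∧ ‖L‖ ≤ K
  tmul_mul : ∀ a a' b b',
    MC.mul (tmul a b) (tmul a' b') = tmul (MA.mul a a') (MB.mul b b')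

attribute [instance] TensorAlgData.normedC TensorAlgData.spaceC TensorAlgData.completeC

/-- The `ℓ¹`-Munn matrix space `𝕄_Λ(A)`: `Λ × Λ` matrices over `A` with summable
entrywise norms. -/
abbrev MatL1 (Λ : Type) (A : Type) [NormedAddCommGroup A] : Type :=
  lp (fun _ : Λ × Λ => A) 1


set_option linter.unusedSectionVars false

section Aux
variable {Λ : Type} [Nonempty Λ] [DecidableEq Λ] {R : Type} [NormedAddCommGroup R]

lemma l1_summable (f : MatL1 Λ R) : Summable fun p => ‖f p‖ := by
  have := (lp.hasSum_norm (p := 1) (by norm_num) f).summable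
  simpa using this

lemma l1_norm_eq (f : MatL1 Λ R) : ‖f‖ = ∑' p, ‖f p‖ := by
  have := (lp.hasSum_norm (p := 1) (by norm_num) f).tsum_eq
  simpa using this.symm

lemma l1_norm_single (p : Λ × Λ) (a : R) : ‖(lp.single 1 p a : MatL1 Λ R)‖ = ‖a‖ := by
  simpa using lp.norm_single (p := 1) (E := fun _ : Λ × Λ => R) (by norm_num) (fun _ => a) p

lemma l1_hasSum (f : MatL1 Λ R) : HasSum (fun p => (lp.single 1 p (f p) : MatL1 Λ R)) f :=
  lp.hasSum_single (by norm_num) f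

lemma l1_single_apply (p : Λ × Λ) (a : R) (q : Λ × Λ) :
    (lp.single 1 p a : MatL1 Λ R) q = if q = p then a else 0 := by
  by_cases h : q = p
  · subst h; simp [lp.single_apply_self]
  · simp [lp.single_apply_ne _ _ _ h, h]

lemma l1_dense_singles [NormedSpace ℂ R] :
    Dense (Submodule.span ℂ
      (Set.range fun q : (Λ × Λ) × R => (lp.single 1 q.1 q.2 : MatL1 Λ R)) : Set (MatL1 Λ R)) := by
  intro x
  exact mem_closure_of_tendsto (l1_hasSum x)
    (Filter.Eventually.of_forall fun s => Submodule.sum_mem _ fun p _ =>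
      Submodule.subset_span ⟨(p, x p), rfl⟩)

end Aux

section Mul
variable {Λ : Type} [Nonempty Λ] [DecidableEq Λ] {R : Type} [NonUnitalNormedRing R]
  [NormedSpace ℂ R] [CompleteSpace R]

lemma mul_single_single (M : BanachAlgebraStr (MatL1 Λ R))
    (hM : ∀ (f g : MatL1 Λ R) (i k : Λ), (M.mul f g) (i, k) = ∑' j : Λ, f (i, j) * g (j, k))
    (i j k l : Λ) (a b : R) :
    M.mul (lp.single 1 (i, j) a) (lp.single 1 (k, l) b)
      = if j = k then (lp.single 1 (i, l) (a * b) : MatL1 Λ R) else 0 := by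
  apply lp.ext
  funext q
  obtain ⟨i', l'⟩ := q
  rw [hM]
  rw [tsum_eq_single j (fun j' hj' => by
    simp [l1_single_apply, Prod.ext_iff, hj'])]
  rw [apply_ite (fun x : MatL1 Λ R => x (i', l'))]
  simp only [l1_single_apply, Prod.ext_iff, lp.coeFn_zero, Pi.zero_apply]
  split_ifs <;> simp_all
end Mul

section MulCLM
variable {X : Type u} [NormedAddCommGroup X] [NormedSpace ℂ X] [CompleteSpace X]

noncomputable def mulRight (M : BanachAlgebraStr X) (c : X) : X →L[ℂ] X :=
  LinearMap.mkContinuous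
    { toFun := fun a => M.mul a c
      map_add' := fun a b => M.add_mul' a b c
      map_smul' := fun r a => M.smul_mul' r a c }
    (M.bound.choose * ‖c‖)
    (fun a => le_trans (M.bound.choose_spec a c) (le_of_eq (by ring)))

@[simp] lemma mulRight_apply (M : BanachAlgebraStr X) (c a : X) : mulRight M c a = M.mul a c := rfl

noncomputable def mulLeft (M : BanachAlgebraStr X) (c : X) : X →L[ℂ] X :=
  LinearMap.mkContinuous
    { toFun := fun a => M.mul c a
      map_add' := fun a b => M.mul_add' c a b
      map_smul' := fun r a => M.mul_smul' r c a }
    (M.bound.choose * ‖c‖)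
    (fun a => le_trans (M.bound.choose_spec c a) (le_of_eq (by ring)))

@[simp] lemma mulLeft_apply (M : BanachAlgebraStr X) (c a : X) : mulLeft M c a = M.mul c a := rfl

end MulCLM

section Theta
variable {Λ : Type} [Nonempty Λ] [DecidableEq Λ] {A' : Type}
    [NonUnitalNormedRing A'] [NormedSpace ℂ A'] [IsScalarTower ℂ A' A']
    [SMulCommClass ℂ A' A'] [CompleteSpace A']
    {MA : BanachAlgebraStr A'} {MC : BanachAlgebraStr (MatL1 Λ ℂ)}

lemma tmul_zero_left (T : TensorAlgData MA MC) (b : MatL1 Λ ℂ) : T.tmul 0 b = 0 := by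
  have := T.tmul_smul_left 0 0 b
  simpa using this

lemma tmul_zero_right (T : TensorAlgData MA MC) (a : A') : T.tmul a 0 = 0 := by
  have := T.tmul_smul_right 0 a 0
  simpa using this

lemma theta_summable (T : TensorAlgData MA MC) (f : MatL1 Λ A') :
    Summable fun p : Λ × Λ => T.tmul (f p) (lp.single 1 p (1 : ℂ)) := by
  refine Summable.of_norm_bounded (l1_summable f) fun p => ?_
  calc ‖T.tmul (f p) (lp.single 1 p (1 : ℂ))‖
      ≤ ‖f p‖ * ‖(lp.single 1 p (1 : ℂ) : MatL1 Λ ℂ)‖ := T.norm_tmul _ _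
    _ = ‖f p‖ := by rw [l1_norm_single]; simp

noncomputable def thetaLin (T : TensorAlgData MA MC) : MatL1 Λ A' →ₗ[ℂ] T.C where
  toFun := fun f => ∑' p : Λ × Λ, T.tmul (f p) (lp.single 1 p (1 : ℂ))
  map_add' := fun f g => by
    dsimp only
    have h : (fun p : Λ × Λ => T.tmul ((f + g) p) (lp.single 1 p (1 : ℂ)))
        = fun p => T.tmul (f p) (lp.single 1 p (1 : ℂ)) + T.tmul (g p) (lp.single 1 p (1 : ℂ)) := by
      funext p
      rw [show (f + g) p = f p + g p from congrFun (lp.coeFn_add f g) p, T.tmul_add_left]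
    rw [h]
    exact Summable.tsum_add (theta_summable T f) (theta_summable T g)
  map_smul' := fun c f => by
    dsimp only
    have h : (fun p : Λ × Λ => T.tmul ((c • f) p) (lp.single 1 p (1 : ℂ)))
        = fun p => c • T.tmul (f p) (lp.single 1 p (1 : ℂ)) := by
      funext p
      rw [show (c • f) p = c • f p from congrFun (lp.coeFn_smul c f) p, T.tmul_smul_left]
    simp only [RingHom.id_apply]
    rw [h]
    exact ((theta_summable T f).hasSum.const_smul c).tsum_eq

lemma theta_norm_le (T : TensorAlgData MA MC) (f : MatL1 Λ A') :
    ‖thetaLin T f‖ ≤ ‖f‖ := by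
  have hb : ∀ p : Λ × Λ, ‖T.tmul (f p) (lp.single 1 p (1 : ℂ))‖ ≤ ‖f p‖ := fun p => by
    calc ‖T.tmul (f p) (lp.single 1 p (1 : ℂ))‖
        ≤ ‖f p‖ * ‖(lp.single 1 p (1 : ℂ) : MatL1 Λ ℂ)‖ := T.norm_tmul _ _
      _ = ‖f p‖ := by rw [l1_norm_single]; simp
  have hs : Summable fun p : Λ × Λ => ‖T.tmul (f p) (lp.single 1 p (1 : ℂ))‖ :=
    Summable.of_nonneg_of_le (fun _ => norm_nonneg _) hb (l1_summable f)
  calc ‖thetaLin T f‖ ≤ ∑' p : Λ × Λ, ‖T.tmul (f p) (lp.single 1 p (1 : ℂ))‖ :=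
        norm_tsum_le_tsum_norm hs
    _ ≤ ∑' p : Λ × Λ, ‖f p‖ := Summable.tsum_le_tsum hb hs (l1_summable f)
    _ = ‖f‖ := (l1_norm_eq f).symm

noncomputable def thetaL (T : TensorAlgData MA MC) : MatL1 Λ A' →L[ℂ] T.C :=
  LinearMap.mkContinuous (thetaLin T) 1 (fun f => by rw [one_mul]; exact theta_norm_le T f)

lemma thetaL_apply (T : TensorAlgData MA MC) (f : MatL1 Λ A') :
    thetaL T f = ∑' p : Λ × Λ, T.tmul (f p) (lp.single 1 p (1 : ℂ)) := rfl

lemma theta_hasSum (T : TensorAlgData MA MC) (f : MatL1 Λ A') :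
    HasSum (fun p : Λ × Λ => T.tmul (f p) (lp.single 1 p (1 : ℂ))) (thetaL T f) :=
  (theta_summable T f).hasSum

lemma thetaL_single (T : TensorAlgData MA MC) (p : Λ × Λ) (a : A') :
    thetaL T (lp.single 1 p a) = T.tmul a (lp.single 1 p (1 : ℂ)) := by
  rw [thetaL_apply,
    tsum_eq_single p (fun q hq => by rw [l1_single_apply, if_neg hq, tmul_zero_left]),
    l1_single_apply, if_pos rfl]

noncomputable def scale (a : A') (m : MatL1 Λ ℂ) : MatL1 Λ A' :=
  ⟨fun p => m p • a, memℓp_gen (by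
    have h := (l1_summable m).mul_right ‖a‖
    simpa [norm_smul] using h)⟩

lemma scale_coe (a : A') (m : MatL1 Λ ℂ) : ⇑(scale a m) = fun p => m p • a := rfl

lemma scale_single (a : A') (p : Λ × Λ) :
    scale a (lp.single 1 p (1 : ℂ)) = lp.single 1 p a := by
  apply lp.ext
  funext q
  rw [scale_coe]
  simp only [l1_single_apply]
  split_ifs <;> simp

lemma scale_norm (a : A') (m : MatL1 Λ ℂ) : ‖scale a m‖ = ‖m‖ * ‖a‖ := by
  have h1 : ‖scale a m‖ = ∑' p : Λ × Λ, ‖m p • a‖ := l1_norm_eq _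
  rw [h1, l1_norm_eq m]
  simp only [norm_smul]
  exact tsum_mul_right

lemma scale_add_left (a a' : A') (m : MatL1 Λ ℂ) :
    scale (a + a') m = scale a m + scale a' m := by
  apply lp.ext
  rw [lp.coeFn_add, scale_coe, scale_coe, scale_coe]
  funext p
  exact smul_add (m p) a a'

lemma scale_add_right (a : A') (m m' : MatL1 Λ ℂ) :
    scale a (m + m') = scale a m + scale a m' := by
  apply lp.ext
  rw [lp.coeFn_add, scale_coe, scale_coe, scale_coe]
  funext p
  rw [show (m + m') p = m p + m' p from congrFun (lp.coeFn_add m m') p, add_smul]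
  rfl

lemma scale_smul_left (c : ℂ) (a : A') (m : MatL1 Λ ℂ) :
    scale (c • a) m = c • scale a m := by
  apply lp.ext
  rw [lp.coeFn_smul, scale_coe, scale_coe]
  funext p
  exact smul_comm (m p) c a

lemma scale_smul_right (c : ℂ) (a : A') (m : MatL1 Λ ℂ) :
    scale a (c • m) = c • scale a m := by
  apply lp.ext
  rw [lp.coeFn_smul, scale_coe, scale_coe]
  funext p
  rw [show (c • m) p = c * m p from congrFun (lp.coeFn_smul c m) p, mul_smul]
  rfl

noncomputable def tmulR (T : TensorAlgData MA MC) (a : A') : MatL1 Λ ℂ →L[ℂ] T.C :=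
  LinearMap.mkContinuous
    { toFun := T.tmul a
      map_add' := T.tmul_add_right a
      map_smul' := fun c m => T.tmul_smul_right c a m }
    ‖a‖ (fun m => T.norm_tmul a m)

@[simp] lemma tmulR_apply (T : TensorAlgData MA MC) (a : A') (m : MatL1 Λ ℂ) :
    tmulR T a m = T.tmul a m := rfl

end Theta

/-- For a Banach algebra `A` and a nonempty index set `Λ`, the map
`θ : 𝕄_Λ(A) → A ⊗̂ 𝕄_Λ(ℂ)`, `(a_{ij}) ↦ ∑_{i,j} a_{ij} ⊗ E_{ij}`, is an isometric
algebra isomorphism.  Here `𝕄_Λ(A)` carries matrix multiplication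
(`MM`, entrywise `∑_j a_{ij} b_{jk}`), `𝕄_Λ(ℂ)` likewise (`MC`), and `A ⊗̂ 𝕄_Λ(ℂ)` is
any realization `T` of the projective tensor product of the Banach algebras `A` and
`𝕄_Λ(ℂ)`.  The isomorphism `θ` is characterized by being linear, isometric, bijective,
multiplicative, and sending `a · E_{ij}` to `a ⊗ E_{ij}`. -/
theorem munn_tensor_iso {Λ : Type} [Nonempty Λ] [DecidableEq Λ] {A : Type}
    [NonUnitalNormedRing A] [NormedSpace ℂ A] [IsScalarTower ℂ A A]
    [SMulCommClass ℂ A A] [CompleteSpace A]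
    (MA : BanachAlgebraStr A) (hMA : ∀ a b : A, MA.mul a b = a * b)
    (MC : BanachAlgebraStr (MatL1 Λ ℂ))
    (hMC : ∀ (f g : MatL1 Λ ℂ) (i k : Λ),
      (MC.mul f g) (i, k) = ∑' j : Λ, f (i, j) * g (j, k))
    (MM : BanachAlgebraStr (MatL1 Λ A))
    (hMM : ∀ (f g : MatL1 Λ A) (i k : Λ),
      (MM.mul f g) (i, k) = ∑' j : Λ, f (i, j) * g (j, k))
    (T : TensorAlgData MA MC) :
    ∃ θ : MatL1 Λ A ≃ₗᵢ[ℂ] T.C,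
      (∀ f g : MatL1 Λ A, θ (MM.mul f g) = T.MC.mul (θ f) (θ g)) ∧
      ∀ (i j : Λ) (a : A),
        θ (lp.single 1 (i, j) a) = T.tmul a (lp.single 1 (i, j) (1 : ℂ)) := by
  classical
  obtain ⟨L, hL, hLn⟩ := T.lift (MatL1 Λ A) scale 1 scale_add_left scale_add_right
    scale_smul_left scale_smul_right
    (fun a m => le_of_eq (by rw [scale_norm]; ring))
  have hLθ : ∀ f : MatL1 Λ A, L (thetaL T f) = f := fun f => by
    have h1 := (theta_hasSum T f).mapL L
    simp only [hL, scale_single] at h1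
    exact h1.unique (l1_hasSum f)
  have hθL : ∀ x : T.C, thetaL T (L x) = x := by
    have key : (thetaL T).comp L = ContinuousLinearMap.id ℂ T.C := by
      apply ContinuousLinearMap.ext_on T.dense_span
      rintro x ⟨⟨a, m⟩, rfl⟩
      simp only [ContinuousLinearMap.comp_apply, ContinuousLinearMap.id_apply]
      rw [hL]
      have h2 := (l1_hasSum m).mapL (tmulR T a)
      have h3 : ∀ p : Λ × Λ, tmulR T a (lp.single 1 p (m p)) =
          T.tmul (scale a m p) (lp.single 1 p (1 : ℂ)) := fun p => by
        have hs : (lp.single 1 p (m p) : MatL1 Λ ℂ) = (m p) • lp.single 1 p (1 : ℂ) := by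
          rw [← lp.single_smul]
          congr 1
          simp
        rw [hs, map_smul, tmulR_apply, ← T.tmul_smul_left, scale_coe]
      simp only [h3, tmulR_apply] at h2
      exact ((theta_hasSum T (scale a m)).unique h2)
    exact fun x => DFunLike.congr_fun key x
  have hiso : ∀ f : MatL1 Λ A, ‖thetaL T f‖ = ‖f‖ := fun f => by
    refine le_antisymm (theta_norm_le T f) ?_
    calc ‖f‖ = ‖L (thetaL T f)‖ := by rw [hLθ]
      _ ≤ ‖L‖ * ‖thetaL T f‖ := L.le_opNorm _
      _ ≤ 1 * ‖thetaL T f‖ := mul_le_mul_of_nonneg_right hLn (norm_nonneg _)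
      _ = ‖thetaL T f‖ := one_mul _
  refine ⟨⟨{ (thetaL T).toLinearMap with invFun := L, left_inv := hLθ, right_inv := hθL },
    hiso⟩, ?_, ?_⟩
  · -- multiplicativity
    have hss : ∀ (i j k l : Λ) (a b : A),
        thetaL T (MM.mul (lp.single 1 (i, j) a) (lp.single 1 (k, l) b))
          = T.MC.mul (thetaL T (lp.single 1 (i, j) a)) (thetaL T (lp.single 1 (k, l) b)) := by
      intro i j k l a b
      rw [mul_single_single MM hMM, thetaL_single, thetaL_single, T.tmul_mul, hMA,
        mul_single_single MC hMC]
      by_cases h : j = k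
      · rw [if_pos h, if_pos h, thetaL_single]
        simp
      · rw [if_neg h, if_neg h, map_zero, tmul_zero_right]
    have step1 : ∀ (q : Λ × Λ) (b : A) (f : MatL1 Λ A),
        thetaL T (MM.mul f (lp.single 1 q b))
          = T.MC.mul (thetaL T f) (thetaL T (lp.single 1 q b)) := by
      intro q b f
      have key := ContinuousLinearMap.ext_on (l1_dense_singles (Λ := Λ) (R := A))
        (f := (thetaL T).comp (mulRight MM (lp.single 1 q b)))
        (g := (mulRight T.MC (thetaL T (lp.single 1 q b))).comp (thetaL T)) ?_
      · exact DFunLike.congr_fun key f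
      · rintro x ⟨⟨⟨i, j⟩, a⟩, rfl⟩
        obtain ⟨k, l⟩ := q
        simpa only [ContinuousLinearMap.comp_apply, mulRight_apply] using hss i j k l a b
    intro f g
    have key := ContinuousLinearMap.ext_on (l1_dense_singles (Λ := Λ) (R := A))
      (f := (thetaL T).comp (mulLeft MM f))
      (g := (mulLeft T.MC (thetaL T f)).comp (thetaL T)) ?_
    · exact DFunLike.congr_fun key g
    · rintro x ⟨⟨q, b⟩, rfl⟩
      simpa only [ContinuousLinearMap.comp_apply, mulLeft_apply] using step1 q b f
  · intro i j a
    exact thetaL_single T (i, j) a
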